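/- Let a₁, a₂ be coprime integers greater than 1. The number of positive integers less than a₁·a₂ that are not representable as a nonnegative integer combination of a₁ and a₂ equals (a₁−1)(a₂−1)/2. -/

import Mathlib

theorem stmt_3 (a₁ a₂ : ℕ) (h₁ : 1 < a₁) (h₂ : 1 < a₂)
    (hcop : Nat.gcd a₁ a₂ = 1) :
    {x : ℕ | 0 < x ∧ x < a₁ * a₂ ∧ ¬ ∃ l₁ l₂ : ℕ, x = l₁ * a₁ + l₂ * a₂}.ncard
      = (a₁ - 1) * (a₂ - 1) / 2 := by
  have cop : Nat.Coprime a₁ a₂ := hcop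
  set Rep : ℕ → Prop := fun x => ∃ l₁ l₂ : ℕ, x = l₁ * a₁ + l₂ * a₂ with hRep
  set F := a₁ * a₂ - a₁ - a₂ with hF
  have hmn : a₁ + a₂ ≤ a₁ * a₂ := add_le_mul h₁ h₂
  have hfr := frobeniusNumber_pair cop h₁ h₂
  simp_rw [FrobeniusNumber, AddSubmonoid.mem_closure_pair] at hfr
  have hclos : ∀ x : ℕ, Rep x ↔ (∃ m n : ℕ, m • a₁ + n • a₂ = x) := by
    intro x
    constructor
    · rintro ⟨l₁, l₂, rfl⟩; exact ⟨l₁, l₂, by simp [smul_eq_mul]⟩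
    · rintro ⟨m, n, h⟩; exact ⟨m, n, by simp [smul_eq_mul] at h; omega⟩
  have notRepF : ¬ Rep F := by
    rw [hclos]; exact hfr.1
  have upper : ∀ k : ℕ, ¬ Rep k → k ≤ F := by
    intro k hk
    exact hfr.2 (by rw [hclos] at hk; exact hk)
  have Radd : ∀ x y : ℕ, Rep x → Rep y → Rep (x + y) := by
    rintro x y ⟨l₁, l₂, rfl⟩ ⟨m₁, m₂, rfl⟩
    exact ⟨l₁ + m₁, l₂ + m₂, by ring⟩
  have key1 : ∀ k : ℕ, k ≤ F → Rep k → ¬ Rep (F - k) := by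
    intro k hk hrep hrep'
    exact notRepF (by have := Radd _ _ hrep hrep'; rwa [Nat.add_sub_cancel' hk] at this)
  have key2 : ∀ k : ℕ, k ≤ F → ¬ Rep k → Rep (F - k) := by
    intro k hkF hk
    set c := (Nat.chineseRemainder cop 0 k).1 with hc
    have hc1 : c ≡ 0 [MOD a₁] := (Nat.chineseRemainder cop 0 k).2.1
    have hc2 : c ≡ k [MOD a₂] := (Nat.chineseRemainder cop 0 k).2.2
    have hclt : c < a₁ * a₂ :=
      Nat.chineseRemainder_lt_mul cop 0 k (by omega) (by omega)
    have hkc : k < c := by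
      by_contra hle
      push_neg at hle
      obtain ⟨a, ha⟩ := (Nat.modEq_zero_iff_dvd).mp hc1
      obtain ⟨b, hb⟩ := (Nat.modEq_iff_dvd' hle).mp hc2
      refine hk ⟨a, b, ?_⟩
      rw [mul_comm a a₁, ← ha, mul_comm b a₂, ← hb]
      omega
    obtain ⟨q, hq⟩ := (Nat.modEq_zero_iff_dvd).mp hc1
    obtain ⟨s, hs⟩ := (Nat.modEq_iff_dvd' hkc.le).mp hc2.symm
    have hq1 : 1 ≤ q := by nlinarith
    have hq2 : q + 1 ≤ a₂ := by
      have : a₁ * q < a₁ * a₂ := by omega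
      have := Nat.lt_of_mul_lt_mul_left this
      omega
    have hs1 : 1 ≤ s := by
      rcases Nat.eq_zero_or_pos s with rfl | h
      · simp at hs; omega
      · exact h
    refine ⟨a₂ - 1 - q, s - 1, ?_⟩
    have hk2 : k + a₂ * s = c := by omega
    have hzk : (k : ℤ) + a₂ * s = a₁ * q := by exact_mod_cast hq ▸ hk2
    have h1a : 1 ≤ a₂ := by omega
    have h2a : q ≤ a₂ - 1 := by omega
    have hi1 : a₁ ≤ a₁ * a₂ := by omega
    have hi2 : a₂ ≤ a₁ * a₂ - a₁ := by omega
    rw [hF]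
    zify [hi1, hi2, show k ≤ a₁ * a₂ - a₁ - a₂ from hkF, h1a, h2a, hs1]
    linear_combination -hzk
  classical
  set A := (Finset.range (F + 1)).filter (fun x => ¬ Rep x) with hA
  set B := (Finset.range (F + 1)).filter (fun x => Rep x) with hB
  have hset : {x : ℕ | 0 < x ∧ x < a₁ * a₂ ∧ ¬ ∃ l₁ l₂ : ℕ, x = l₁ * a₁ + l₂ * a₂} = ↑A := by
    ext x
    simp only [Set.mem_setOf_eq, hA, Finset.coe_filter, Finset.mem_range, Set.mem_setOf_eq]
    constructor
    · rintro ⟨hx0, hxlt, hnr⟩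
      exact ⟨by have := upper x hnr; omega, hnr⟩
    · rintro ⟨hxle, hnr⟩
      refine ⟨?_, ?_, hnr⟩
      · rcases Nat.eq_zero_or_pos x with rfl | h
        · exact absurd ⟨0, 0, by ring⟩ hnr
        · exact h
      · omega
  rw [hset, Set.ncard_coe_finset]
  have hcards : A.card + B.card = F + 1 := by
    have h := Finset.card_filter_add_card_filter_not
      (s := Finset.range (F + 1)) (p := fun x => Rep x)
    rw [Finset.card_range] at h
    rw [hA, hB]
    omega
  have hAB : A.card = B.card := by
    apply Finset.card_bij (fun x _ => F - x)
    · intro x hx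
      simp only [hA, Finset.mem_filter, Finset.mem_range] at hx
      simp only [hB, Finset.mem_filter, Finset.mem_range]
      exact ⟨by omega, key2 x (by omega) hx.2⟩
    · intro x hx y hy h
      simp only [hA, Finset.mem_filter, Finset.mem_range] at hx hy
      omega
    · intro y hy
      simp only [hB, Finset.mem_filter, Finset.mem_range] at hy
      refine ⟨F - y, ?_, by omega⟩
      simp only [hA, Finset.mem_filter, Finset.mem_range]
      exact ⟨by omega, key1 y (by omega) hy.2⟩
  have hFval : (a₁ - 1) * (a₂ - 1) = F + 1 := by
    have hi1 : a₁ ≤ a₁ * a₂ := by omega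
    have hi2 : a₂ ≤ a₁ * a₂ - a₁ := by omega
    rw [hF]
    zify [hi1, hi2, show 1 ≤ a₁ by omega, show 1 ≤ a₂ by omega]
    ring
  rw [hFval]
  omega
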